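/- Let G be a torsion-free pro-p group such that every open subgroup has finite abelianization (FAb). Then the exponents of the abelianizations U^{ab}, as U ranges over a neighborhood basis of open subgroups of G, are unbounded. Equivalently: if there is an integer k such that exp(U^{ab}) ≤ k for all open subgroups U of G in some neighborhood basis of the identity, then G is trivial or not torsion-free. -/

import Mathlib

open scoped Pointwise
open scoped commutatorElement

/-- A nontrivial torsion-free FAb pro-`p` group has unbounded exponents of
abelianizations of open subgroups: if the exponents `exp(U^{ab})` are bounded
by some `k ≥ 1` over all open subgroups `U`, then `G` is trivial or has torsion. -/
theorem unbounded_exponents_of_torsionfree_FAb_pro_p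
    (p : ℕ) (hp : p.Prime)
    (G : Type*) [Group G] [TopologicalSpace G] [IsTopologicalGroup G]
    [CompactSpace G] [T2Space G] [TotallyDisconnectedSpace G]
    -- `G` is pro-`p`: open normal subgroups have `p`-group quotients
    (hpro : ∀ (U : Subgroup G) [U.Normal], IsOpen (U : Set G) → IsPGroup p (G ⧸ U))
    -- FAb: every open subgroup has finite abelianization
    (hfab : ∀ U : Subgroup G, IsOpen (U : Set G) → Finite (Abelianization ↥U))
    -- torsion-free
    (htf : ∀ x : G, ∀ m : ℕ, 0 < m → x ^ m = 1 → x = 1)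
    -- nontrivial
    (hnt : ∃ x : G, x ≠ 1) :
    ¬ ∃ k : ℕ, 0 < k ∧ ∀ U : Subgroup G, IsOpen (U : Set G) →
        Monoid.exponent (Abelianization ↥U) ≤ k := by
  rintro ⟨k, hk, hbound⟩
  obtain ⟨x, hx⟩ := hnt
  set n := k.factorial with hn_def
  have hn : 0 < n := Nat.factorial_pos k
  have hxn : x ^ n ≠ 1 := fun h => hx (htf x n hn h)
  -- find an open normal subgroup avoiding x^n
  obtain ⟨V, hVclopen, h1V, hVsub⟩ :=
    compact_exists_isClopen_in_isOpen (isOpen_compl_singleton (x := x ^ n))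
      (Set.mem_compl_singleton_iff.mpr (Ne.symm hxn))
  obtain ⟨H, hH⟩ :=
    IsTopologicalGroup.exist_openNormalSubgroup_sub_clopen_nhds_of_one hVclopen h1V
  set U : Subgroup G := H.toSubgroup with hU_def
  have hUnormal : U.Normal := H.isNormal'
  have hxnU : x ^ n ∉ U := fun h => (hVsub (hH h)) rfl
  -- the open subgroup W = U ⊔ ⟨x⟩
  set W : Subgroup G := U ⊔ Subgroup.zpowers x with hW_def
  have hWopen : IsOpen (W : Set G) := Subgroup.isOpen_mono le_sup_left H.isOpen
  -- commutators of W lie in U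
  have hcomm : ∀ a ∈ W, ∀ b ∈ W, ⁅a, b⁆ ∈ U := by
    intro a ha b hb
    have hmap : W.map (QuotientGroup.mk' U) = Subgroup.zpowers ((QuotientGroup.mk' U) x) := by
      rw [hW_def, Subgroup.map_sup, QuotientGroup.map_mk'_self, MonoidHom.map_zpowers,
        bot_sup_eq]
    have hamem : (QuotientGroup.mk' U) a ∈ Subgroup.zpowers ((QuotientGroup.mk' U) x) := by
      rw [← hmap]; exact Subgroup.mem_map_of_mem _ ha
    have hbmem : (QuotientGroup.mk' U) b ∈ Subgroup.zpowers ((QuotientGroup.mk' U) x) := by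
      rw [← hmap]; exact Subgroup.mem_map_of_mem _ hb
    obtain ⟨m, hm⟩ := hamem
    obtain ⟨l, hl⟩ := hbmem
    have hcom : Commute ((QuotientGroup.mk' U) a) ((QuotientGroup.mk' U) b) := by
      rw [← hm, ← hl]; exact (Commute.refl _).zpow_zpow m l
    have : (QuotientGroup.mk' U) ⁅a, b⁆ = 1 := by
      rw [map_commutatorElement, commutatorElement_eq_one_iff_commute]; exact hcom
    rwa [← QuotientGroup.ker_mk' U, MonoidHom.mem_ker]
  have hxW : x ∈ W := Subgroup.mem_sup_right (Subgroup.mem_zpowers x)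
  set y : ↥W := ⟨x, hxW⟩ with hy_def
  have hfin : Finite (Abelianization ↥W) := hfab W hWopen
  have hexp : Monoid.exponent (Abelianization ↥W) ≤ k := hbound W hWopen
  have hpos : 0 < Monoid.exponent (Abelianization ↥W) :=
    Nat.pos_of_ne_zero (Monoid.exponent_ne_zero_of_finite)
  have hdvd : Monoid.exponent (Abelianization ↥W) ∣ n := Nat.dvd_factorial hpos hexp
  have h1 : (Abelianization.of (y ^ n)) = 1 := by
    obtain ⟨c, hc⟩ := hdvd
    rw [map_pow, hc, pow_mul, Monoid.pow_exponent_eq_one, one_pow]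
  have hyc : y ^ n ∈ commutator ↥W := by
    exact (QuotientGroup.eq_one_iff (y ^ n)).mp h1
  have hle : commutator ↥W ≤ U.comap W.subtype := by
    rw [commutator_def, Subgroup.commutator_le]
    intro g1 _ g2 _
    simp only [Subgroup.mem_comap]
    have : W.subtype ⁅g1, g2⁆ = ⁅W.subtype g1, W.subtype g2⁆ := map_commutatorElement _ _ _
    rw [this]
    exact hcomm _ g1.2 _ g2.2
  have : x ^ n ∈ U := by
    have := hle hyc
    rwa [Subgroup.mem_comap] at this
  exact hxnU this
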